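/- Let M be an n×n matrix of germs of functions meromorphic at 0 ∈ ℂ with determinant not identically zero. Then M can be written M = C·R (as germs of meromorphic matrices at 0), where C is an n×n matrix of rational functions over ℂ with det C ≠ 0, and R is an n×n matrix of functions holomorphic at 0 with R(0) invertible. -/

import Mathlib

open Filter Topology

/-- Evaluation of a rational function over `ℂ` at a point of `ℂ`. -/
noncomputable def ratEval (r : RatFunc ℂ) (z : ℂ) : ℂ := r.eval (RingHom.id ℂ) z

private lemma analyticAt_polyEval (q : Polynomial ℂ) (x : ℂ) :
    AnalyticAt ℂ (fun z => q.eval z) x := by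
  have := (analyticAt_id (𝕜 := ℂ) (E := ℂ) (z := x)).aeval_polynomial q
  simpa [Polynomial.coe_aeval_eq_eval] using this

private lemma analyticAt_dslope0 {f : ℂ → ℂ} (hf : AnalyticAt ℂ f 0) :
    AnalyticAt ℂ (dslope f 0) 0 := by
  obtain ⟨p, hp⟩ := hf
  exact ⟨p.fslope, hp.has_fpower_series_dslope_fslope⟩

private lemma exists_trunc (N : ℕ) : ∀ (f : ℂ → ℂ), AnalyticAt ℂ f 0 →
    ∃ (q : Polynomial ℂ) (h : ℂ → ℂ), AnalyticAt ℂ h 0 ∧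
      ∀ z, f z = q.eval z + z ^ N * h z := by
  induction N with
  | zero => exact fun f hf => ⟨0, f, hf, fun z => by simp⟩
  | succ N ih =>
    intro f hf
    obtain ⟨q, h, hh, hq⟩ := ih f hf
    refine ⟨q + Polynomial.C (h 0) * Polynomial.X ^ N, dslope h 0,
      analyticAt_dslope0 hh, fun z => ?_⟩
    have h1 : h z = h 0 + z * dslope h 0 z := by
      have := sub_smul_dslope h 0 z
      rw [sub_zero, smul_eq_mul] at this
      linear_combination -this
    rw [hq z, h1]
    simp only [Polynomial.eval_add, Polynomial.eval_mul, Polynomial.eval_pow,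
      Polynomial.eval_C, Polynomial.eval_X]
    ring

private lemma analyticAt_det {n : ℕ} (A : Fin n → Fin n → ℂ → ℂ)
    (hA : ∀ i j, AnalyticAt ℂ (A i j) 0) :
    AnalyticAt ℂ (fun z => (Matrix.of fun i j => A i j z).det) 0 := by
  have hdet : ∀ z, (Matrix.of fun i j => A i j z).det
      = ∑ σ : Equiv.Perm (Fin n), ((Equiv.Perm.sign σ : ℤ) : ℂ) * ∏ i, A (σ i) i z := by
    intro z
    rw [Matrix.det_apply]
    congr 1
    ext σ
    simp [Matrix.of_apply, Units.smul_def, zsmul_eq_mul]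
  simp_rw [hdet]
  exact Finset.analyticAt_fun_sum _ fun σ _ =>
    analyticAt_const.mul (Finset.analyticAt_fun_prod _ fun i _ => hA (σ i) i)

private lemma det_add_pow {n N : ℕ} (A H : Fin n → Fin n → ℂ → ℂ)
    (hA : ∀ i j, AnalyticAt ℂ (A i j) 0) (hH : ∀ i j, AnalyticAt ℂ (H i j) 0) :
    ∃ W : ℂ → ℂ, AnalyticAt ℂ W 0 ∧ ∀ z,
      (Matrix.of fun i j => A i j z + z ^ N * H i j z).det
        = (Matrix.of fun i j => A i j z).det + z ^ N * W z := by
  classical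
  set E : ℕ → Fin n → Fin n → ℂ → ℂ :=
    fun j i k z => if (k : ℕ) < j then A i k z else A i k z + z ^ N * H i k z with hE
  set D : ℕ → Fin n → Fin n → ℂ → ℂ :=
    fun j i k z => if (k : ℕ) = j then H i k z else E j i k z with hD
  set Fm : ℕ → ℂ → ℂ := fun j z => (Matrix.of fun i k => E j i k z).det with hFm
  refine ⟨fun z => ∑ j ∈ Finset.range n, (Matrix.of fun i k => D j i k z).det, ?_, ?_⟩
  · apply Finset.analyticAt_fun_sum
    intro j _
    apply analyticAt_det
    intro i k
    by_cases h1 : (k : ℕ) = j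
    · simpa [hD, h1] using hH i k
    · by_cases h2 : (k : ℕ) < j
      · simpa [hD, hE, h1, h2] using hA i k
      · have : D j i k = fun z => A i k z + z ^ N * H i k z := by
          funext z; simp [hD, hE, h1, h2]
        rw [this]
        exact (hA i k).add ((analyticAt_id.pow N).mul (hH i k))
  · intro z
    have step : ∀ j ∈ Finset.range n,
        Fm j z - Fm (j + 1) z = z ^ N * (Matrix.of fun i k => D j i k z).det := by
      intro j hj
      rw [Finset.mem_range] at hj
      set jj : Fin n := ⟨j, hj⟩
      set M0 : Matrix (Fin n) (Fin n) ℂ := Matrix.of fun i k => E j i k z with hM0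
      have m1 : (Matrix.of fun i k => E j i k z) = M0.updateCol jj
          ((fun i => A i jj z) + (z ^ N • fun i => H i jj z)) := by
        ext i k
        rw [Matrix.updateCol_apply]
        split_ifs with h
        · subst h; simp [hM0, hE, jj]
        · rfl
      have m2 : (Matrix.of fun i k => E (j + 1) i k z)
          = M0.updateCol jj (fun i => A i jj z) := by
        ext i k
        rw [Matrix.updateCol_apply]
        split_ifs with h
        · subst h; simp [hE, jj]
        · have hkj : (k : ℕ) ≠ j := fun hc => h (Fin.ext hc)
          have hiff : ((k : ℕ) < j + 1) = ((k : ℕ) < j) := by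
            apply propext; omega
          have hiff' : ((k : ℕ) ≤ j) = ((k : ℕ) < j) := by
            apply propext; omega
          simp [hM0, hE, hiff, hiff']
      have e1 : Fm j z = (M0.updateCol jj
          ((fun i => A i jj z) + (z ^ N • fun i => H i jj z))).det := by
        exact congrArg Matrix.det m1
      have e2 : Fm (j + 1) z = (M0.updateCol jj (fun i => A i jj z)).det := by
        exact congrArg Matrix.det m2
      have e3 : (Matrix.of fun i k => D j i k z)
          = M0.updateCol jj (fun i => H i jj z) := by
        ext i k
        rw [Matrix.updateCol_apply]
        split_ifs with h
        · subst h; simp [hD, jj]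
        · have hkj : (k : ℕ) ≠ j := fun hc => h (Fin.ext hc)
          simp [hM0, hD, hkj]
      rw [e1, e2, e3, Matrix.det_updateCol_add, Matrix.det_updateCol_smul]
      ring
    have tele := Finset.sum_range_sub' (fun j => Fm j z) n
    rw [Finset.sum_congr rfl step] at tele
    have h0 : Fm 0 z = (Matrix.of fun i j => A i j z + z ^ N * H i j z).det := by
      simp [hFm, hE]
    have hn : Fm n z = (Matrix.of fun i j => A i j z).det := by
      have : ∀ i k : Fin n, E n i k z = A i k z := by
        intro i k; simp [hE, k.isLt]
      simp only [hFm]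
      have : (Matrix.of fun i k => E n i k z) = (Matrix.of fun i k => A i k z) := by
        ext i k; exact this i k
      rw [this]
    rw [← Finset.mul_sum] at tele
    rw [h0, hn] at tele
    linear_combination -tele

private lemma ratEval_div (p q : Polynomial ℂ) {z : ℂ} (hq : q.eval z ≠ 0) :
    ratEval (algebraMap (Polynomial ℂ) (RatFunc ℂ) p / algebraMap _ _ q) z
      = p.eval z / q.eval z := by
  have hq0 : q ≠ 0 := fun h => hq (by simp [h])
  set r := algebraMap (Polynomial ℂ) (RatFunc ℂ) p / algebraMap _ _ q with hr
  have hmul : r * algebraMap _ _ q = algebraMap _ _ p :=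
    div_mul_cancel₀ _ (RatFunc.algebraMap_ne_zero hq0)
  have e2 : ∀ s : Polynomial ℂ, s.eval₂ (RingHom.id ℂ) z = s.eval z := fun s => rfl
  have hdr : (r.denom).eval₂ (RingHom.id ℂ) z ≠ 0 := by
    obtain ⟨t, ht⟩ := RatFunc.denom_div_dvd p q
    rw [e2]
    intro h0
    apply hq
    rw [ht, Polynomial.eval_mul, h0, zero_mul]
  have hdq : ((algebraMap (Polynomial ℂ) (RatFunc ℂ) q).denom).eval₂ (RingHom.id ℂ) z ≠ 0 := by
    rw [RatFunc.denom_algebraMap]; simp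
  have hev := RatFunc.eval_mul (f := RingHom.id ℂ) (a := z) hdr hdq
  rw [hmul] at hev
  rw [RatFunc.eval_algebraMap, RatFunc.eval_algebraMap] at hev
  -- hev : eval (RingHom.id) z r * (algebraMap _ (Polynomial ℂ) q).eval₂ id z = ...
  rw [show (algebraMap (Polynomial ℂ) (Polynomial ℂ)) q = q from rfl,
    show (algebraMap (Polynomial ℂ) (Polynomial ℂ)) p = p from rfl, e2, e2] at hev
  rw [ratEval, eq_div_iff hq]
  exact hev.symm

set_option synthInstance.maxHeartbeats 1000000 in
set_option maxHeartbeats 1000000 in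
/-- Let `M` be an `n×n` matrix of germs of meromorphic functions at
`0` with determinant not identically zero. Then `M = C·R` as germs at `0`, where `C`
is a matrix of rational functions with `det C ≠ 0`, and `R` is a matrix of functions
holomorphic at `0` with `R(0)` invertible. -/
theorem meromorphic_matrix_factorization_at_zero
    (n : ℕ) (M : Matrix (Fin n) (Fin n) (ℂ → ℂ))
    (hM : ∀ i j, MeromorphicAt (M i j) 0)
    (hdet : ∃ᶠ z in 𝓝[≠] (0 : ℂ), (Matrix.of fun i j => M i j z).det ≠ 0) :
    ∃ C : Matrix (Fin n) (Fin n) (RatFunc ℂ),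
      C.det ≠ 0 ∧
      ∃ R : Matrix (Fin n) (Fin n) (ℂ → ℂ),
        (∀ i j, AnalyticAt ℂ (R i j) 0) ∧
        IsUnit (Matrix.of fun i j => R i j 0).det ∧
        ∀ᶠ z in 𝓝[≠] (0 : ℂ),
          (Matrix.of fun i j => M i j z)
            = (Matrix.of fun i j => ratEval (C i j) z) *
              (Matrix.of fun i j => R i j z) := by
  classical
  -- Step 1: common power K clearing all poles
  have hKij : ∀ i j, ∃ k : ℕ, AnalyticAt ℂ (fun z => z ^ k * M i j z) 0 := by
    intro i j
    obtain ⟨k, hk⟩ := hM i j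
    exact ⟨k, by simpa [smul_eq_mul] using hk⟩
  choose k hk using hKij
  set K : ℕ := ∑ i : Fin n, ∑ j : Fin n, k i j with hK
  have hkK : ∀ i j, k i j ≤ K := by
    intro i j
    calc k i j ≤ ∑ j' : Fin n, k i j' :=
          Finset.single_le_sum (fun _ _ => Nat.zero_le _) (Finset.mem_univ j)
      _ ≤ K := Finset.single_le_sum (f := fun i' => ∑ j' : Fin n, k i' j')
          (fun _ _ => Nat.zero_le _) (Finset.mem_univ i)
  set G : Fin n → Fin n → ℂ → ℂ := fun i j z => z ^ K * M i j z with hG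
  have hGan : ∀ i j, AnalyticAt ℂ (G i j) 0 := by
    intro i j
    have heq : (fun z : ℂ => z ^ (K - k i j) * (z ^ k i j * M i j z)) = G i j := by
      funext z
      rw [← mul_assoc, ← pow_add]
      congr 2
      have := hkK i j
      omega
    rw [← heq]
    exact ((analyticAt_id.pow _).mul (hk i j))
  -- Step 2: determinant of G
  set dG : ℂ → ℂ := fun z => (Matrix.of fun i j => G i j z).det with hdG_def
  have hdG : AnalyticAt ℂ dG 0 := analyticAt_det G hGan
  have hdG_eq : ∀ z, dG z = (z ^ K) ^ n * (Matrix.of fun i j => M i j z).det := by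
    intro z
    have : (Matrix.of fun i j => G i j z) = (z ^ K) • Matrix.of fun i j => M i j z := by
      ext i j
      simp [hG, smul_eq_mul]
    rw [hdG_def]
    simp only
    rw [this, Matrix.det_smul, Fintype.card_fin]
  have hz_ne : ∀ᶠ z in 𝓝[≠] (0 : ℂ), z ≠ 0 := eventually_mem_nhdsWithin
  have hfreq : ∃ᶠ z in 𝓝[≠] (0 : ℂ), dG z ≠ 0 := by
    refine (hdet.and_eventually hz_ne).mono ?_
    rintro z ⟨h1, h2⟩
    rw [hdG_eq]
    exact mul_ne_zero (pow_ne_zero _ (pow_ne_zero _ h2)) h1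
  have hne_top : analyticOrderAt dG 0 ≠ ⊤ := by
    intro htop
    have hev := analyticOrderAt_eq_top.mp htop
    obtain ⟨z, h1, h2⟩ :=
      (hfreq.and_eventually (eventually_nhdsWithin_of_eventually_nhds hev)).exists
    exact h1 h2
  set m : ℕ := (analyticOrderAt dG 0).toNat with hm_def
  have hm : analyticOrderAt dG 0 = (m : ℕ∞) := (ENat.coe_toNat hne_top).symm
  obtain ⟨u, hu, hu0, huev⟩ := (hdG.analyticOrderAt_eq_natCast (n := m)).mp hm
  -- Step 3: truncation at order m+1
  have htr := fun i j => exists_trunc (m + 1) (G i j) (hGan i j)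
  choose pm Hm hHm hsplit using htr
  -- Step 4: determinant splitting
  obtain ⟨W, hW, hWeq⟩ := det_add_pow (N := m + 1) (fun i j z => (pm i j).eval z) Hm
    (fun i j => analyticAt_polyEval _ 0) hHm
  set Pdet : Polynomial ℂ := (Matrix.of pm).det with hPdet_def
  have hPdet_eval : ∀ z, (Matrix.of fun i j => (pm i j).eval z).det = Pdet.eval z := by
    intro z
    have h1 : (Matrix.of pm).map (Polynomial.evalRingHom z)
        = Matrix.of fun i j => (pm i j).eval z := by
      ext i j
      simp [Matrix.map_apply]
    rw [← h1, hPdet_def]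
    exact ((Polynomial.evalRingHom z).map_det (Matrix.of pm)).symm
  have hdG_split : ∀ z, dG z = Pdet.eval z + z ^ (m + 1) * W z := by
    intro z
    have h1 : (Matrix.of fun i j => G i j z)
        = Matrix.of fun i j => (pm i j).eval z + z ^ (m + 1) * Hm i j z := by
      ext i j
      exact hsplit i j z
    rw [hdG_def]
    simp only
    rw [h1, hWeq z, hPdet_eval z]
  -- Step 5: Pdet has a zero of order exactly m at 0
  set v : ℂ → ℂ := fun z => u z - z * W z with hv_def
  have hv : AnalyticAt ℂ v 0 := hu.sub (analyticAt_id.mul hW)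
  have hv0 : v 0 ≠ 0 := by simpa [hv_def] using hu0
  have hPev : ∀ᶠ z in 𝓝 (0 : ℂ), Pdet.eval z = z ^ m * v z := by
    filter_upwards [huev] with z hz
    have h1 : Pdet.eval z = dG z - z ^ (m + 1) * W z := by
      rw [hdG_split z]; ring
    rw [h1, hz]
    simp only [sub_zero, smul_eq_mul, hv_def]
    ring
  set e : ℂ → ℂ := fun z => Pdet.eval z with he_def
  have he : AnalyticAt ℂ e 0 := analyticAt_polyEval Pdet 0
  have horder_m : analyticOrderAt e 0 = (m : ℕ∞) := by
    rw [he.analyticOrderAt_eq_natCast]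
    exact ⟨v, hv, hv0, by filter_upwards [hPev] with z hz; simpa [smul_eq_mul] using hz⟩
  have hPdet_ne : Pdet ≠ 0 := by
    intro h0
    have hev : ∀ᶠ z in 𝓝 (0 : ℂ), e z = 0 := Eventually.of_forall (by simp [he_def, h0])
    rw [← analyticOrderAt_eq_top] at hev
    rw [hev] at horder_m
    exact (ENat.top_ne_coe m) horder_m
  set r : ℕ := Polynomial.rootMultiplicity 0 Pdet with hr_def
  set Qp : Polynomial ℂ :=
    Pdet /ₘ (Polynomial.X - Polynomial.C 0) ^ r with hQp_def
  have hQP : (Polynomial.X - Polynomial.C 0) ^ r * Qp = Pdet :=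
    Polynomial.pow_mul_divByMonic_rootMultiplicity_eq Pdet 0
  have hQp0 : Qp.eval 0 ≠ 0 :=
    Polynomial.eval_divByMonic_pow_rootMultiplicity_ne_zero 0 hPdet_ne
  have hfact_r : ∀ z, Pdet.eval z = z ^ r * Qp.eval z := by
    intro z
    conv_lhs => rw [← hQP]
    simp
  have horder_r : analyticOrderAt e 0 = (r : ℕ∞) := by
    rw [he.analyticOrderAt_eq_natCast]
    exact ⟨fun z => Qp.eval z, analyticAt_polyEval Qp 0, hQp0,
      Eventually.of_forall fun z => by simp [he_def, hfact_r z, smul_eq_mul]⟩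
  have hrm : r = m := Nat.cast_injective (horder_r.symm.trans horder_m)
  have hfact : ∀ z, Pdet.eval z = z ^ m * Qp.eval z := by
    intro z; rw [hfact_r z, hrm]
  -- Step 6: definitions of C and R
  set Cmat : Matrix (Fin n) (Fin n) (RatFunc ℂ) := Matrix.of fun i j =>
    algebraMap (Polynomial ℂ) (RatFunc ℂ) (pm i j)
      / algebraMap (Polynomial ℂ) (RatFunc ℂ) (Polynomial.X ^ K) with hC_def
  have hXK_ne : (Polynomial.X : Polynomial ℂ) ^ K ≠ 0 := pow_ne_zero _ Polynomial.X_ne_zero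
  have hCdet : Cmat.det ≠ 0 := by
    have hC : Cmat = (algebraMap (Polynomial ℂ) (RatFunc ℂ) (Polynomial.X ^ K))⁻¹
        • (Matrix.of pm).map (algebraMap (Polynomial ℂ) (RatFunc ℂ)) := by
      ext i j
      simp [hC_def, Matrix.map_apply, div_eq_mul_inv, mul_comm, smul_eq_mul]
    rw [hC, Matrix.det_smul, Fintype.card_fin]
    have h1 : ((Matrix.of pm).map (algebraMap (Polynomial ℂ) (RatFunc ℂ))).det
        = algebraMap (Polynomial ℂ) (RatFunc ℂ) Pdet := by
      rw [hPdet_def]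
      exact ((algebraMap (Polynomial ℂ) (RatFunc ℂ)).map_det (Matrix.of pm)).symm
    rw [h1]
    exact mul_ne_zero (pow_ne_zero _ (inv_ne_zero (RatFunc.algebraMap_ne_zero hXK_ne)))
      (RatFunc.algebraMap_ne_zero hPdet_ne)
  set Rm : Matrix (Fin n) (Fin n) (ℂ → ℂ) := Matrix.of fun i j => fun z =>
    (if i = j then (1 : ℂ) else 0)
      + z * (Qp.eval z)⁻¹ * ∑ l, ((Matrix.of pm).adjugate i l).eval z * Hm l j z with hR_def
  refine ⟨Cmat, hCdet, Rm, ?_, ?_, ?_⟩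
  · intro i j
    have : Rm i j = fun z =>
        (if i = j then (1 : ℂ) else 0)
          + z * (Qp.eval z)⁻¹ * ∑ l, ((Matrix.of pm).adjugate i l).eval z * Hm l j z := rfl
    rw [this]
    exact analyticAt_const.add ((analyticAt_id.mul
        ((analyticAt_polyEval Qp 0).inv hQp0)).mul
      (Finset.analyticAt_fun_sum _ fun l _ => (analyticAt_polyEval _ 0).mul (hHm l j)))
  · have hR0 : (Matrix.of fun i j => Rm i j 0) = 1 := by
      ext i j
      simp [hR_def, Matrix.one_apply]
    rw [hR0, Matrix.det_one]
    exact isUnit_one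
  · have hQ_ev : ∀ᶠ z in 𝓝 (0 : ℂ), Qp.eval z ≠ 0 :=
      (Qp.continuous.continuousAt).eventually_ne hQp0
    filter_upwards [eventually_nhdsWithin_of_eventually_nhds hQ_ev, hz_ne] with z hQz hz0
    set Pz : Matrix (Fin n) (Fin n) ℂ := (Matrix.of pm).map (fun q => q.eval z) with hPz_def
    have hPzdet : Pz.det = Pdet.eval z := by
      rw [hPdet_def]
      exact ((Polynomial.evalRingHom z).map_det (Matrix.of pm)).symm
    set Hz : Matrix (Fin n) (Fin n) ℂ := Matrix.of fun i j => Hm i j z with hHz_def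
    have hadj : Pz.adjugate = ((Matrix.of pm).adjugate).map (fun q => q.eval z) := by
      have := (Polynomial.evalRingHom z).map_adjugate (Matrix.of pm)
      simpa [RingHom.mapMatrix_apply] using this.symm
    have hRz : (Matrix.of fun i j => Rm i j z)
        = 1 + (z * (Qp.eval z)⁻¹) • (Pz.adjugate * Hz) := by
      ext i j
      simp only [hR_def, Matrix.of_apply, Matrix.add_apply, Matrix.one_apply,
        Matrix.smul_apply, Matrix.mul_apply, hadj, Matrix.map_apply, hHz_def,
        smul_eq_mul, Finset.mul_sum]
    have hPR : Pz * (Matrix.of fun i j => Rm i j z) = Matrix.of fun i j => G i j z := by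
      rw [hRz, Matrix.mul_add, Matrix.mul_one, Matrix.mul_smul, ← Matrix.mul_assoc,
        Matrix.mul_adjugate, hPzdet, Matrix.smul_mul, Matrix.one_mul, smul_smul,
        hfact z]
      have hc : z * (Qp.eval z)⁻¹ * (z ^ m * Qp.eval z) = z ^ (m + 1) := by
        field_simp
        ring
      rw [hc]
      ext i j
      simp only [Matrix.add_apply, Matrix.smul_apply, hPz_def, Matrix.map_apply,
        Matrix.of_apply, smul_eq_mul, hHz_def]
      exact (hsplit i j z).symm
    have hCz : (Matrix.of fun i j => ratEval (Cmat i j) z) = (z ^ K)⁻¹ • Pz := by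
      ext i j
      rw [hC_def]
      simp only [Matrix.of_apply, Matrix.smul_apply, hPz_def, Matrix.map_apply,
        smul_eq_mul]
      rw [ratEval_div]
      · rw [Polynomial.eval_pow, Polynomial.eval_X, div_eq_inv_mul]
      · rw [Polynomial.eval_pow, Polynomial.eval_X]
        exact pow_ne_zero _ hz0
    rw [hCz, Matrix.smul_mul, hPR]
    ext i j
    simp only [Matrix.smul_apply, Matrix.of_apply, smul_eq_mul, hG]
    rw [inv_mul_cancel_left₀ (pow_ne_zero _ hz0)]
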